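/- Let f : ℝ → ℝ satisfy f'(s)s ≤ c₁|s|^p for |s| ≥ 1 and f'(s)s ≤ c₁|s|^q for |s| ≤ 1, and f(s) ≥ c₀|s|^p for |s| ≥ 1, f(s) ≥ c₀|s|^q for |s| ≤ 1, with 2 < p < q and c₀, c₁ > 0. Then for every measurable function w on a measure space (X, μ) and every t ∈ (0, 1], ∫ f'(t w) (t w) dμ ≤ (c₁ t^p / c₀) ∫ f(w) dμ, provided both integrals are finite. -/

import Mathlib

open MeasureTheory

/-- `∫ f'(t w)(t w) dμ ≤ (c₁ t^p / c₀) ∫ f(w) dμ` for `t ∈ (0,1]`. -/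
theorem stmt3 {X : Type*} [MeasurableSpace X] (ν : Measure X)
    (w : X → ℝ) (hw : Measurable w)
    (f : ℝ → ℝ) (hdf : Differentiable ℝ f)
    (c0 c1 p q : ℝ) (hc0 : 0 < c0) (hc1 : 0 < c1) (hp : 2 < p) (hpq : p < q)
    (hfp : ∀ s : ℝ, 1 ≤ |s| → deriv f s * s ≤ c1 * |s| ^ p)
    (hfq : ∀ s : ℝ, |s| ≤ 1 → deriv f s * s ≤ c1 * |s| ^ q)
    (hgp : ∀ s : ℝ, 1 ≤ |s| → c0 * |s| ^ p ≤ f s)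
    (hgq : ∀ s : ℝ, |s| ≤ 1 → c0 * |s| ^ q ≤ f s)
    (t : ℝ) (ht : t ∈ Set.Ioc (0 : ℝ) 1)
    (hint1 : Integrable (fun x => deriv f (t * w x) * (t * w x)) ν)
    (hint2 : Integrable (fun x => f (w x)) ν) :
    ∫ x, deriv f (t * w x) * (t * w x) ∂ν ≤ (c1 * t ^ p / c0) * ∫ x, f (w x) ∂ν := by
  obtain ⟨ht0, ht1⟩ := ht
  set C : ℝ := c1 * t ^ p / c0 with hC
  have hCpos : 0 < C := by
    apply div_pos (mul_pos hc1 (Real.rpow_pos_of_pos ht0 p)) hc0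
  have hcancel : ∀ r : ℝ, C * (c0 * r) = c1 * t ^ p * r := by
    intro r
    field_simp [hC]
    rw [hC, div_mul_cancel₀ _ hc0.ne']; ring
  have key : ∀ s : ℝ, deriv f (t * s) * (t * s) ≤ C * f s := by
    intro s
    have habs : |t * s| = t * |s| := by rw [abs_mul, abs_of_pos ht0]
    rcases le_total 1 |s| with hs | hs
    · have hfs := hgp s hs
      rcases le_total 1 |t * s| with hts | hts
      · calc deriv f (t * s) * (t * s) ≤ c1 * |t * s| ^ p := hfp _ hts
          _ = c1 * t ^ p * |s| ^ p := by
              rw [habs, Real.mul_rpow ht0.le (abs_nonneg s), mul_assoc]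
          _ = C * (c0 * |s| ^ p) := (hcancel _).symm
          _ ≤ C * f s := by
              exact mul_le_mul_of_nonneg_left hfs hCpos.le
      · have hts0 : 0 < |t * s| := by
          rw [habs]
          exact mul_pos ht0 (lt_of_lt_of_le one_pos hs)
        calc deriv f (t * s) * (t * s) ≤ c1 * |t * s| ^ q := hfq _ hts
          _ ≤ c1 * |t * s| ^ p := by
              apply mul_le_mul_of_nonneg_left _ hc1.le
              exact Real.rpow_le_rpow_of_exponent_ge hts0 hts hpq.le
          _ = c1 * t ^ p * |s| ^ p := by
              rw [habs, Real.mul_rpow ht0.le (abs_nonneg s), mul_assoc]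
          _ = C * (c0 * |s| ^ p) := (hcancel _).symm
          _ ≤ C * f s := mul_le_mul_of_nonneg_left (hgp s hs) hCpos.le
    · have hts : |t * s| ≤ 1 := by
        rw [habs]
        calc t * |s| ≤ 1 * 1 := mul_le_mul ht1 hs (abs_nonneg s) one_pos.le
          _ = 1 := one_mul 1
      calc deriv f (t * s) * (t * s) ≤ c1 * |t * s| ^ q := hfq _ hts
        _ = c1 * t ^ q * |s| ^ q := by
            rw [habs, Real.mul_rpow ht0.le (abs_nonneg s), mul_assoc]
        _ ≤ c1 * t ^ p * |s| ^ q := by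
            apply mul_le_mul_of_nonneg_right _ (Real.rpow_nonneg (abs_nonneg s) q)
            exact mul_le_mul_of_nonneg_left
              (Real.rpow_le_rpow_of_exponent_ge ht0 ht1 hpq.le) hc1.le
        _ = C * (c0 * |s| ^ q) := (hcancel _).symm
        _ ≤ C * f s := mul_le_mul_of_nonneg_left (hgq s hs) hCpos.le
  calc ∫ x, deriv f (t * w x) * (t * w x) ∂ν
      ≤ ∫ x, C * f (w x) ∂ν :=
        integral_mono hint1 (hint2.const_mul C) fun x => key (w x)
    _ = C * ∫ x, f (w x) ∂ν := MeasureTheory.integral_const_mul C _
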